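/- Let (X, τ) be a T_d topological space with derived-set operator d, and let τ⁺ be its derivative topology. For any subset U ⊆ X and point x ∈ X, U contains a τ⁺-neighborhood of x (i.e., there is a τ⁺-open set V with x ∈ V ⊆ U) if and only if one of the following holds: (i) x is not doubly d-reflexive and x ∈ U; (ii) x is doubly d-reflexive and there exist a τ-open set A and a set B ⊆ X such that x ∈ A ∩ d(B) and A ∩ d(B) ⊆ U. -/

import Mathlib

/-- The derivative topology `τ⁺` of a topology `t`: the topology generated by
the `t`-open sets together with all derived sets `d_t(A)`, `A ⊆ X`. -/
def derivTopology {X : Type*} (t : TopologicalSpace X) : TopologicalSpace X :=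
  TopologicalSpace.generateFrom
    ({U : Set X | @IsOpen X t U} ∪ {S : Set X | ∃ A : Set X, S = @derivedSet X t A})

/-- A point `x` is doubly d-reflexive if `x ∈ d(X)` and for all `A`, `B`,
`x ∈ d(A) ∩ d(B)` implies `x ∈ d(d(A) ∩ d(B))`. -/
def DoublyDReflexive {X : Type*} [TopologicalSpace X] (x : X) : Prop :=
  x ∈ derivedSet (Set.univ : Set X) ∧
    ∀ A B : Set X, x ∈ derivedSet A ∩ derivedSet B →
      x ∈ derivedSet (derivedSet A ∩ derivedSet B)

section Helpers

open TopologicalSpace Set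

variable {X : Type*} [t : TopologicalSpace X]

lemma dsub (hTd : ∀ A : Set X, IsClosed (derivedSet A)) (B : Set X) :
    derivedSet (derivedSet B) ⊆ derivedSet B :=
  (isClosed_iff_derivedSet_subset _).mp (hTd B)

/-- combine finitely many derived sets containing x into one -/
lemma combine (hTd : ∀ A : Set X, IsClosed (derivedSet A)) {x : X}
    (hx : DoublyDReflexive x) (G : Set (Set X)) (hG : G.Finite)
    (hmem : ∀ S ∈ G, ∃ B : Set X, S = derivedSet B) (hxG : x ∈ ⋂₀ G) :
    ∃ B : Set X, x ∈ derivedSet B ∧ derivedSet B ⊆ ⋂₀ G := by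
  revert hmem hxG
  refine Set.Finite.induction_on (motive := fun G _ => (∀ S ∈ G, ∃ B : Set X, S = derivedSet B) →
    x ∈ ⋂₀ G → ∃ B : Set X, x ∈ derivedSet B ∧ derivedSet B ⊆ ⋂₀ G) G hG
    (fun _ _ => ⟨Set.univ, hx.1, by simp⟩) ?_
  clear hG G
  intro S G hSG hGfin ih hmem hxG
  · obtain ⟨B, hxB, hBG⟩ := ih (fun T hT => hmem T (Set.mem_insert_of_mem _ hT))
      (fun T hT => hxG T (Set.mem_insert_of_mem _ hT))
    obtain ⟨B₀, rfl⟩ := hmem _ (Set.mem_insert _ _)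
    have hxB₀ : x ∈ derivedSet B₀ := hxG _ (Set.mem_insert _ _)
    refine ⟨derivedSet B₀ ∩ derivedSet B, hx.2 B₀ B ⟨hxB₀, hxB⟩, ?_⟩
    intro y hy
    have h1 : y ∈ derivedSet B₀ :=
      dsub hTd B₀ (derivedSet_mono _ _ Set.inter_subset_left hy)
    have h2 : y ∈ derivedSet B :=
      dsub hTd B (derivedSet_mono _ _ Set.inter_subset_right hy)
    rw [Set.sInter_insert]
    exact ⟨h1, hBG h2⟩

lemma notMem_derivedSet {S : Set X} {x : X} (h : x ∉ derivedSet S) :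
    ∃ W : Set X, IsOpen W ∧ x ∈ W ∧ W ∩ S ⊆ {x} := by
  rw [mem_derivedSet, accPt_iff_nhds] at h
  push_neg at h
  obtain ⟨U, hU, hUs⟩ := h
  obtain ⟨W, hWU, hWo, hxW⟩ := mem_nhds_iff.mp hU
  exact ⟨W, hWo, hxW, fun y ⟨hyW, hyS⟩ => hUs y ⟨hWU hyW, hyS⟩⟩

lemma oInter {V W : Set X} (h1 : @IsOpen X (derivTopology t) V)
    (h2 : @IsOpen X (derivTopology t) W) : @IsOpen X (derivTopology t) (V ∩ W) :=
  @IsOpen.inter X (derivTopology t) V W h1 h2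

lemma subOpen (S : Set X) (h : S ∈ ({U : Set X | @IsOpen X t U} ∪
    {S : Set X | ∃ A : Set X, S = @derivedSet X t A})) :
    @IsOpen X (derivTopology t) S :=
  TopologicalSpace.isOpen_generateFrom_of_mem h

end Helpers

/-- In a `T_d`-space `(X, t)`, a set `U` contains a
`t⁺`-neighborhood of `x` iff either (i) `x` is not doubly d-reflexive and
`x ∈ U`, or (ii) `x` is doubly d-reflexive and there are a `t`-open `A` and a
set `B` with `x ∈ A ∩ d(B) ⊆ U`. -/
theorem derivTopology_nhds_characterization {X : Type*} [t : TopologicalSpace X]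
    (hTd : ∀ A : Set X, IsClosed (derivedSet A)) (U : Set X) (x : X) :
    (∃ V : Set X, @IsOpen X (derivTopology t) V ∧ x ∈ V ∧ V ⊆ U) ↔
      ((¬ DoublyDReflexive x ∧ x ∈ U) ∨
        (DoublyDReflexive x ∧ ∃ A B : Set X, IsOpen A ∧
          x ∈ A ∩ derivedSet B ∧ A ∩ derivedSet B ⊆ U)) := by
  set s : Set (Set X) := {U : Set X | @IsOpen X t U} ∪
      {S : Set X | ∃ A : Set X, S = @derivedSet X t A} with hs
  constructor
  · rintro ⟨V, hV, hxV, hVU⟩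
    by_cases hx : DoublyDReflexive x
    · right
      refine ⟨hx, ?_⟩
      obtain ⟨W, ⟨F, ⟨hFfin, hFsub⟩, rfl⟩, hxW, hWV⟩ :=
        @TopologicalSpace.IsTopologicalBasis.exists_subset_of_mem_open X (derivTopology t)
          _ (@TopologicalSpace.isTopologicalBasis_of_subbasis X (derivTopology t) s rfl)
          x V hxV hV
      set F₁ : Set (Set X) := {S ∈ F | IsOpen S} with hF₁
      set G : Set (Set X) := {S ∈ F | ¬ IsOpen S} with hG
      have hA : IsOpen (⋂₀ F₁) :=
        Set.Finite.isOpen_sInter (hFfin.subset (Set.sep_subset _ _)) (fun S hS => hS.2)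
      obtain ⟨B, hxB, hBG⟩ := combine hTd hx G (hFfin.subset (Set.sep_subset _ _))
        (fun S hS => by
          rcases hFsub hS.1 with h | h
          · exact absurd h hS.2
          · exact h)
        (fun S hS => hxW S hS.1)
      refine ⟨⋂₀ F₁, B, hA, ⟨fun S hS => hxW S hS.1, hxB⟩, ?_⟩
      intro y ⟨hy1, hy2⟩
      refine hVU (hWV fun S hS => ?_)
      by_cases hSo : IsOpen S
      · exact hy1 S ⟨hS, hSo⟩
      · exact hBG hy2 S ⟨hS, hSo⟩
    · left; exact ⟨hx, hVU hxV⟩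
  · rintro (⟨hx, hxU⟩ | ⟨hx, A, B, hA, hxAB, hABU⟩)
    · -- {x} is τ⁺-open
      rw [DoublyDReflexive, not_and_or] at hx
      rcases hx with hx | hx
      · obtain ⟨W, hWo, hxW, hW⟩ := notMem_derivedSet hx
        refine ⟨W, subOpen W (Or.inl hWo), hxW, fun y hy => ?_⟩
        have : y = x := hW ⟨hy, Set.mem_univ y⟩
        rwa [this]
      · push_neg at hx
        obtain ⟨A, B, hxAB, hnd⟩ := hx
        obtain ⟨W, hWo, hxW, hW⟩ := notMem_derivedSet hnd
        refine ⟨W ∩ (derivedSet A ∩ derivedSet B),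
          oInter (subOpen W (Or.inl hWo))
            (oInter (subOpen _ (Or.inr ⟨A, rfl⟩)) (subOpen _ (Or.inr ⟨B, rfl⟩))),
          ⟨hxW, hxAB⟩, fun y hy => ?_⟩
        have : y = x := hW hy
        rwa [this]
    · exact ⟨A ∩ derivedSet B,
        oInter (subOpen A (Or.inl hA)) (subOpen _ (Or.inr ⟨B, rfl⟩)), hxAB, hABU⟩
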